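/- For any artin algebra Λ, the dimension of the subcategory Λ-mod inside the bounded derived category satisfies tri.dim_{D^b(Λ-mod)} (Λ-mod) ≤ ext.dim Λ. -/

import Mathlib

universe u v w

open CategoryTheory

namespace Paper

/-! ## Module-theoretic notions -/

section Modules

variable (Λ : Type u) [Ring Λ]

/-- `M` belongs to `add V`: `M` is a direct summand of a finite direct sum of copies of `V`. -/
def MemAdd (V M : ModuleCat.{u} Λ) : Prop :=
  ∃ (n : ℕ) (s : M →ₗ[Λ] (Fin n → V)) (r : (Fin n → V) →ₗ[Λ] M),
    r.comp s = LinearMap.id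

/-- `f : P → M` is a projective cover: `P` is projective, `f` is surjective and
`ker f` is a superfluous submodule of `P`. -/
def IsProjectiveCover {P M : ModuleCat.{u} Λ} (f : P →ₗ[Λ] M) : Prop :=
  Module.Projective Λ P ∧ Function.Surjective f ∧
    ∀ N : Submodule Λ P, N ⊔ LinearMap.ker f = ⊤ → N = ⊤

/-- `S` is (a model of) the syzygy `Ω(M)`: the kernel of a projective cover of `M`. -/
def IsSyzygy (M S : ModuleCat.{u} Λ) : Prop :=
  ∃ (P : ModuleCat.{u} Λ) (f : P →ₗ[Λ] M), IsProjectiveCover Λ f ∧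
    Nonempty (S ≃ₗ[Λ] LinearMap.ker f)

/-- `S` is (a model of) the `n`-th syzygy `Ωⁿ(M)`. -/
def IsNthSyzygy : ℕ → ModuleCat.{u} Λ → ModuleCat.{u} Λ → Prop
  | 0, M, S => Nonempty (S ≃ₗ[Λ] M)
  | n + 1, M, S => ∃ T : ModuleCat.{u} Λ, IsSyzygy Λ M T ∧ IsNthSyzygy n T S

/-- There is an exact sequence `0 → V_m → ⋯ → V_1 → V_0 → S → 0` with all `V_i ∈ add V`. -/
def HasAddResolution (V : ModuleCat.{u} Λ) : ℕ → ModuleCat.{u} Λ → Prop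
  | 0, S => MemAdd Λ V S
  | m + 1, S => ∃ (W : ModuleCat.{u} Λ) (f : W →ₗ[Λ] S),
      MemAdd Λ V W ∧ Function.Surjective f ∧
      HasAddResolution V m (ModuleCat.of Λ ↥(LinearMap.ker f))

/-- `Λ` is an `(m,n)`-Igusa-Todorov algebra: there is a finitely generated module `V` such
that, for every finitely generated module `M`, the `n`-th syzygy `Ωⁿ(M)` admits an exact
sequence `0 → V_m → ⋯ → V_0 → Ωⁿ(M) → 0` with all `V_i ∈ add V`. -/
def IsIgusaTodorov (m n : ℕ) : Prop :=
  ∃ V : ModuleCat.{u} Λ, Module.Finite Λ V ∧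
    ∀ M : ModuleCat.{u} Λ, Module.Finite Λ M →
      ∀ S : ModuleCat.{u} Λ, IsNthSyzygy Λ n M S → HasAddResolution Λ V m S

/-- Membership in `[T]_{n+1}`, where `[T]_1 = add T` and `[T]_{k+1} = [T]_1 • [T]_k`:
`M ∈ [T]_{n+2}` iff `M` is a direct summand of an extension of a module in `[T]_{n+1}`
by a module in `add T`. -/
def MemBracket (T : ModuleCat.{u} Λ) : ℕ → ModuleCat.{u} Λ → Prop
  | 0, M => MemAdd Λ T M
  | n + 1, M => ∃ (U E V : ModuleCat.{u} Λ) (f : U →ₗ[Λ] E) (g : E →ₗ[Λ] V),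
      Function.Injective f ∧ Function.Surjective g ∧
      LinearMap.range f = LinearMap.ker g ∧
      MemAdd Λ T U ∧ MemBracket T n V ∧
      ∃ (s : M →ₗ[Λ] E) (r : E →ₗ[Λ] M), r.comp s = LinearMap.id

/-- The extension dimension of `Λ`-mod : the least `n` such that
`Λ-mod = [T]_{n+1}` for some finitely generated `T`. -/
noncomputable def extDim : ℕ∞ :=
  sInf {c : ℕ∞ | ∃ (n : ℕ) (T : ModuleCat.{u} Λ), c = n ∧ Module.Finite Λ T ∧
    ∀ M : ModuleCat.{u} Λ, Module.Finite Λ M → MemBracket Λ T n M}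

/-- The weak resolution dimension of `Λ` (Iyama): the least `n` such that there is a
finitely generated `M` so that every finitely generated `X` is a direct summand of some `Y`
admitting an exact sequence `0 → M_n → ⋯ → M_0 → Y → 0` with all `M_i ∈ add M`. -/
noncomputable def wResolDim : ℕ∞ :=
  sInf {c : ℕ∞ | ∃ (n : ℕ) (M : ModuleCat.{u} Λ), c = n ∧ Module.Finite Λ M ∧
    ∀ X : ModuleCat.{u} Λ, Module.Finite Λ X →
      ∃ Y : ModuleCat.{u} Λ, HasAddResolution Λ M n Y ∧ MemAdd Λ Y X}

/-- A module is indecomposable if it is nonzero and admits no nontrivial direct sum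
decomposition. -/
def IsIndecomposable (M : ModuleCat.{u} Λ) : Prop :=
  ¬ Subsingleton M ∧
    ∀ A B : ModuleCat.{u} Λ, Nonempty (M ≃ₗ[Λ] (A × B)) →
      Subsingleton A ∨ Subsingleton B

/-- `Λ` is representation-finite: there are only finitely many isomorphism classes of
finitely generated indecomposable modules. -/
def IsRepFinite : Prop :=
  ∃ (k : ℕ) (M : Fin k → ModuleCat.{u} Λ),
    ∀ X : ModuleCat.{u} Λ, Module.Finite Λ X → IsIndecomposable Λ X →
      ∃ i, Nonempty (X ≃ₗ[Λ] M i)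

/-- There is an exact sequence `0 → P_n → ⋯ → P_0 → M → 0` with all `P_i` projective. -/
def HasProjResolution : ℕ → ModuleCat.{u} Λ → Prop
  | 0, M => Module.Projective Λ M
  | n + 1, M => ∃ (W : ModuleCat.{u} Λ) (f : W →ₗ[Λ] M),
      Module.Projective Λ W ∧ Function.Surjective f ∧
      HasProjResolution n (ModuleCat.of Λ ↥(LinearMap.ker f))

/-- The (left) global dimension of `Λ`. -/
noncomputable def glDim : ℕ∞ :=
  sInf {c : ℕ∞ | ∃ n : ℕ, c = n ∧ ∀ M : ModuleCat.{u} Λ, HasProjResolution Λ n M}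

/-- The `n`-th power of the Jacobson radical of `Λ`. -/
def radPow : ℕ → Ideal Λ
  | 0 => ⊤
  | n + 1 => Ideal.span
      {z : Λ | ∃ x ∈ (⊥ : Ideal Λ).jacobson, ∃ y ∈ radPow n, z = x * y}

/-- The Loewy length of `Λ`: the least `n` with `(rad Λ)ⁿ = 0`. -/
noncomputable def loewyLength : ℕ∞ :=
  sInf {c : ℕ∞ | ∃ n : ℕ, c = n ∧ radPow Λ n = ⊥}

/-- `M` is a generator-cogenerator for `Λ`-mod: `add M` contains all finitely generated
projective modules and all finitely generated injective modules. -/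
def IsGeneratorCogenerator (M : ModuleCat.{u} Λ) : Prop :=
  (∀ P : ModuleCat.{u} Λ, Module.Finite Λ P → Module.Projective Λ P → MemAdd Λ M P) ∧
  (∀ I : ModuleCat.{u} Λ, Module.Finite Λ I → Module.Injective Λ I → MemAdd Λ M I)

open Classical in
/-- The representation dimension of `Λ` (Auslander). -/
noncomputable def repDim : ℕ∞ :=
  if IsSemisimpleRing Λ then 1 else
  sInf {c : ℕ∞ | ∃ M : ModuleCat.{u} Λ, Module.Finite Λ M ∧
    IsGeneratorCogenerator Λ M ∧ c = glDim (Module.End Λ M)}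

end Modules

end Paper
/-! ## Subalgebras, left idealized extensions, representation distance -/

namespace Paper

section Subalg

variable (R : Type u) [CommRing R]

/-- The underlying subset of the ambient algebra `Γ` corresponding to the Jacobson
radical of the subalgebra `A`. -/
def jacobsonCarrier {Γ : Type u} [Ring Γ] [Algebra R Γ] (A : Subalgebra R Γ) : Set Γ :=
  {z : Γ | ∃ h : z ∈ A, (⟨z, h⟩ : A) ∈ (⊥ : Ideal A).jacobson}

/-- `B` is a left idealized extension of `A`: `A ⊆ B` (with the same identity) and the
Jacobson radical `rad A` is a left ideal of `B`. -/
def IsLeftIdealizedExt {Γ : Type u} [Ring Γ] [Algebra R Γ] (A B : Subalgebra R Γ) : Prop :=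
  A ≤ B ∧ ∀ x ∈ B, ∀ z ∈ jacobsonCarrier R A, x * z ∈ jacobsonCarrier R A

/-- The left representation distance of `Λ`: the least `s` such that there is a chain of
subalgebras `Λ = Λ₀ ⊊ Λ₁ ⊊ ⋯ ⊊ Λ_s` (inside some artin algebra `Λ_s`) with `rad Λᵢ` a left
ideal of `Λᵢ₊₁` for all `i` and `Λ_s` representation-finite. -/
noncomputable def lrepDis (Λ : Type u) [Ring Λ] [Algebra R Λ] : ℕ∞ :=
  sInf {c : ℕ∞ | ∃ (s : ℕ) (Γ : Type u) (_ : Ring Γ) (_ : Algebra R Γ)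
    (_ : Module.Finite R Γ) (S : Fin (s + 1) → Subalgebra R Γ), c = s ∧
    Nonempty (Λ ≃ₐ[R] ↥(S 0)) ∧
    (∀ i : Fin s, S i.castSucc < S i.succ) ∧
    (∀ i : Fin s, IsLeftIdealizedExt R (S i.castSucc) (S i.succ)) ∧
    S (Fin.last s) = ⊤ ∧ IsRepFinite ↥(S (Fin.last s))}

end Subalg

end Paper
/-! ## `Hom_Λ(P,-)` and `P ⊗_Γ -` for `Γ = End_Λ(P)ᵒᵖ` -/

namespace Paper

section HomTensor

variable (Λ : Type u) [Ring Λ] (P : Type u) [AddCommGroup P] [Module Λ P]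

/-- `Hom_Λ(P, N)`, regarded as a left module over `Γ = End_Λ(P)ᵒᵖ` by precomposition. -/
def HomP (N : Type u) [AddCommGroup N] [Module Λ N] : Type u := P →ₗ[Λ] N

instance (N : Type u) [AddCommGroup N] [Module Λ N] : AddCommGroup (HomP Λ P N) :=
  inferInstanceAs (AddCommGroup (P →ₗ[Λ] N))

/-- Reinterpret an element of `HomP Λ P N` as a linear map. -/
def HomP.toLin {N : Type u} [AddCommGroup N] [Module Λ N] (f : HomP Λ P N) :
    P →ₗ[Λ] N := f

instance (N : Type u) [AddCommGroup N] [Module Λ N] :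
    SMul (Module.End Λ P)ᵐᵒᵖ (HomP Λ P N) :=
  ⟨fun g f => LinearMap.comp (f : P →ₗ[Λ] N) g.unop⟩

lemma homP_smul_def (N : Type u) [AddCommGroup N] [Module Λ N]
    (g : (Module.End Λ P)ᵐᵒᵖ) (f : HomP Λ P N) :
    g • f = LinearMap.comp (f : P →ₗ[Λ] N) g.unop := rfl

instance (N : Type u) [AddCommGroup N] [Module Λ N] :
    Module (Module.End Λ P)ᵐᵒᵖ (HomP Λ P N) where
  one_smul f := LinearMap.ext fun _ => rfl
  mul_smul g h f := LinearMap.ext fun _ => rfl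
  smul_zero g := LinearMap.ext fun _ => rfl
  smul_add g f₁ f₂ := LinearMap.ext fun _ => rfl
  add_smul g h f := LinearMap.ext fun p => map_add (HomP.toLin Λ P f) _ _
  zero_smul f := LinearMap.ext fun p => map_zero (HomP.toLin Λ P f)

variable (X : Type u) [AddCommGroup X] [Module (Module.End Λ P)ᵐᵒᵖ X]

/-- The defining relations of the tensor product `P ⊗_Γ X`, inside the free module
`X →₀ P`. -/
noncomputable def tensorRels : Submodule Λ (X →₀ P) :=
  Submodule.span Λ
    ({w | ∃ (x y : X) (p : P),
        w = Finsupp.single (x + y) p - Finsupp.single x p - Finsupp.single y p} ∪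
     {w | ∃ (γ : (Module.End Λ P)ᵐᵒᵖ) (x : X) (p : P),
        w = Finsupp.single (γ • x) p - Finsupp.single x (γ.unop p)})

/-- The tensor product `P ⊗_Γ X` over `Γ = End_Λ(P)ᵒᵖ`, as a left `Λ`-module. -/
def TensorPX : Type u := (X →₀ P) ⧸ tensorRels Λ P X

noncomputable instance : AddCommGroup (TensorPX Λ P X) :=
  inferInstanceAs (AddCommGroup ((X →₀ P) ⧸ tensorRels Λ P X))

noncomputable instance : Module Λ (TensorPX Λ P X) :=
  inferInstanceAs (Module Λ ((X →₀ P) ⧸ tensorRels Λ P X))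

end HomTensor

end Paper
/-! ## Dimension of triangulated categories and the bounded derived category -/

namespace Paper

section Tri

open CategoryTheory.Pretriangulated CategoryTheory.Limits

variable (C : Type v) [Category.{w} C]

/-- `X` is a retract (direct summand) of `Y`. -/
def IsRetractOf (X Y : C) : Prop := ∃ (s : X ⟶ Y) (r : Y ⟶ X), s ≫ r = 𝟙 X

variable [Preadditive C] [HasShift C ℤ]

/-- Membership in `⟨I⟩₁`: the closure of `I` under shifts, finite direct sums and
direct summands, i.e. `add {X[i] | X ∈ I, i ∈ ℤ}`. -/
inductive MemThickOne (I : Set C) : C → Prop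
  | of (X : C) : X ∈ I → MemThickOne I X
  | zero (X : C) : IsZero X → MemThickOne I X
  | shift (X : C) (n : ℤ) : MemThickOne I X → MemThickOne I (X⟦n⟧)
  | sum (X Y Z : C) : MemThickOne I X → MemThickOne I Y →
      (∃ (iX : X ⟶ Z) (iY : Y ⟶ Z) (pX : Z ⟶ X) (pY : Z ⟶ Y),
        iX ≫ pX = 𝟙 X ∧ iY ≫ pY = 𝟙 Y ∧ pX ≫ iX + pY ≫ iY = 𝟙 Z) → MemThickOne I Z
  | retract (X Y : C) : MemThickOne I Y → IsRetractOf C X Y → MemThickOne I X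

variable [HasZeroObject C] [∀ n : ℤ, (shiftFunctor C n).Additive] [Pretriangulated C]

/-- `I₁ * I₂`: objects `X` sitting in a distinguished triangle `X₁ → X → X₂ → X₁[1]`
with `X₁ ∈ I₁` and `X₂ ∈ I₂`. -/
def starSet (I₁ I₂ : Set C) : Set C :=
  {X | ∃ (X₁ X₂ : C) (_ : X₁ ∈ I₁) (_ : X₂ ∈ I₂) (f : X₁ ⟶ X) (g : X ⟶ X₂)
        (h : X₂ ⟶ X₁⟦(1 : ℤ)⟧), Triangle.mk f g h ∈ distTriang C}

/-- `⟨I⟩_n`: `⟨I⟩_0 = 0`, `⟨I⟩_1` as above, and `⟨I⟩_{n+1} = ⟨⟨I⟩_n * ⟨I⟩_1⟩_1`. -/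
def thickLevel (I : Set C) : ℕ → Set C
  | 0 => {X | IsZero X}
  | 1 => setOf (MemThickOne C I)
  | n + 2 => setOf (MemThickOne C
      (starSet C (thickLevel I (n + 1)) (setOf (MemThickOne C I))))

/-- The Rouquier dimension of the triangulated category `C`. -/
noncomputable def triDim : ℕ∞ :=
  sInf {c : ℕ∞ | ∃ (n : ℕ) (T : C), c = n ∧ ∀ X : C, X ∈ thickLevel C {T} (n + 1)}

/-- The Rouquier dimension of a subcategory `S` of the triangulated category `C`. -/
noncomputable def triDimSub (S : Set C) : ℕ∞ :=
  sInf {c : ℕ∞ | ∃ (n : ℕ) (T : C), c = n ∧ S ⊆ thickLevel C {T} (n + 1)}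

end Tri

section Derived

open CategoryTheory.Limits

variable (Λ : Type u) [Ring Λ]

/-- An object of the (unbounded) derived category of `Λ`-modules lies in the bounded
derived category `D^b(Λ-mod)` of finitely generated modules iff its homology is bounded
and finitely generated in each degree. -/
def IsDbObject [HasDerivedCategory.{w} (ModuleCat.{u} Λ)]
    (Z : DerivedCategory (ModuleCat.{u} Λ)) : Prop :=
  (∃ a b : ℤ, ∀ n : ℤ, (n < a ∨ b < n) →
      IsZero ((DerivedCategory.homologyFunctor (ModuleCat.{u} Λ) n).obj Z)) ∧
  ∀ n : ℤ, Module.Finite Λ ((DerivedCategory.homologyFunctor (ModuleCat.{u} Λ) n).obj Z)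

/-- The derived dimension of `Λ`: the Rouquier dimension of the bounded derived category
`D^b(Λ-mod)`, realized as the full triangulated subcategory of complexes with bounded,
finitely generated homology inside the derived category of all `Λ`-modules. -/
noncomputable def derivedDim : ℕ∞ :=
  letI := HasDerivedCategory.standard (ModuleCat.{u} Λ)
  sInf {c : ℕ∞ | ∃ (n : ℕ) (T : DerivedCategory (ModuleCat.{u} Λ)), c = n ∧
    IsDbObject Λ T ∧
    ∀ Z : DerivedCategory (ModuleCat.{u} Λ), IsDbObject Λ Z →
      Z ∈ thickLevel (DerivedCategory (ModuleCat.{u} Λ)) {T} (n + 1)}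

/-- The Rouquier dimension of the subcategory `Λ-mod ⊆ D^b(Λ-mod)` (modules viewed as
complexes concentrated in degree `0`). -/
noncomputable def derivedDimOfMod : ℕ∞ :=
  letI := HasDerivedCategory.standard (ModuleCat.{u} Λ)
  sInf {c : ℕ∞ | ∃ (n : ℕ) (T : DerivedCategory (ModuleCat.{u} Λ)), c = n ∧
    IsDbObject Λ T ∧
    ∀ M : ModuleCat.{u} Λ, Module.Finite Λ M →
      (DerivedCategory.singleFunctor (ModuleCat.{u} Λ) 0).obj M ∈
        thickLevel (DerivedCategory (ModuleCat.{u} Λ)) {T} (n + 1)}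

end Derived

end Paper
/-! ## Path algebras of quivers with relations, by generators and relations -/

namespace Paper

section PathAlg

/-- Generators of the path algebra of a quiver: one generator for each vertex
(the corresponding primitive idempotent) and one for each arrow. -/
inductive QGen (V E : Type u) : Type u
  | vertex : V → QGen V E
  | arrow : E → QGen V E

variable (K : Type u) [CommRing K] (V E : Type u)

/-- The generator of the free algebra corresponding to a vertex. -/
def qv (i : V) : FreeAlgebra K (QGen V E) := FreeAlgebra.ι K (QGen.vertex i)

/-- The generator of the free algebra corresponding to an arrow. -/
def qa (a : E) : FreeAlgebra K (QGen V E) := FreeAlgebra.ι K (QGen.arrow a)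

variable [Fintype V] [DecidableEq V] (src tgt : E → V)
  (rels : Set (FreeAlgebra K (QGen V E)))

/-- The relations presenting `KQ/I`: the `e_i` are orthogonal idempotents summing to `1`,
`e_v * a = a` iff `v` is the source of `a` (and `0` otherwise), `a * e_v = a` iff `v` is
the target of `a` (and `0` otherwise) — paths being written from left to right — together
with the relations `r = 0` for `r ∈ rels`. -/
inductive PathRel : FreeAlgebra K (QGen V E) → FreeAlgebra K (QGen V E) → Prop
  | vertexMul (i j : V) :
      PathRel (qv K V E i * qv K V E j) (if i = j then qv K V E i else 0)
  | sumOne : PathRel (∑ i : V, qv K V E i) 1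
  | srcMul (a : E) (v : V) :
      PathRel (qv K V E v * qa K V E a) (if v = src a then qa K V E a else 0)
  | mulTgt (a : E) (v : V) :
      PathRel (qa K V E a * qv K V E v) (if v = tgt a then qa K V E a else 0)
  | ofRel (r : FreeAlgebra K (QGen V E)) : r ∈ rels → PathRel r 0

/-- The path algebra `KQ/I` of the quiver with vertex set `V`, arrow set `E` and
relations `rels`. -/
abbrev PathAlgebra : Type u := RingQuot (PathRel K V E src tgt rels)

end PathAlg

end Paper

/-! ## Auxiliary lemmas for the proof -/

namespace Paper

section DevissageAux

open CategoryTheory.Limits CategoryTheory.Pretriangulated CategoryTheory.Category ZeroObject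

variable {C : Type v} [Category.{w} C] [Preadditive C] [HasShift C ℤ]

lemma isRetractOf_of_iso {X Y : C} (e : X ≅ Y) : IsRetractOf C X Y :=
  ⟨e.hom, e.inv, e.hom_inv_id⟩

lemma isRetractOf_trans {X Y Z : C} (h1 : IsRetractOf C X Y) (h2 : IsRetractOf C Y Z) :
    IsRetractOf C X Z := by
  obtain ⟨s1, r1, hs1⟩ := h1
  obtain ⟨s2, r2, hs2⟩ := h2
  exact ⟨s1 ≫ s2, r2 ≫ r1, by rw [Category.assoc, ← Category.assoc s2, hs2, id_comp, hs1]⟩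

lemma memThickOne_of_iso {I : Set C} {X Y : C} (hY : MemThickOne C I Y) (e : X ≅ Y) :
    MemThickOne C I X :=
  MemThickOne.retract X Y hY (isRetractOf_of_iso e)

lemma prodPairData (f : WalkingPair → C) [HasProduct f] :
    ∃ (iA : f .left ⟶ ∏ᶜ f) (iB : f .right ⟶ ∏ᶜ f) (pA : ∏ᶜ f ⟶ f .left)
      (pB : ∏ᶜ f ⟶ f .right),
      iA ≫ pA = 𝟙 _ ∧ iB ≫ pB = 𝟙 _ ∧ iA ≫ pB = 0 ∧ iB ≫ pA = 0 ∧
        pA ≫ iA + pB ≫ iB = 𝟙 (∏ᶜ f) := by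
  refine ⟨Pi.lift (fun j => match j with | .left => 𝟙 _ | .right => 0),
    Pi.lift (fun j => match j with | .left => 0 | .right => 𝟙 _),
    Pi.π f .left, Pi.π f .right, by simp, by simp, by simp, by simp, ?_⟩
  apply Pi.hom_ext
  rintro (_ | _) <;>
    simp [Preadditive.add_comp]

lemma memThickOne_pi {I : Set C} (f : WalkingPair → C) [HasProduct f]
    (hl : MemThickOne C I (f .left)) (hr : MemThickOne C I (f .right)) :
    MemThickOne C I (∏ᶜ f) := by
  obtain ⟨iA, iB, pA, pB, h1, h2, _, _, h5⟩ := prodPairData f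
  exact MemThickOne.sum _ _ _ hl hr ⟨iA, iB, pA, pB, h1, h2, h5⟩

variable [HasZeroObject C] [∀ n : ℤ, (shiftFunctor C n).Additive] [Pretriangulated C]

lemma thickLevel_succ_eq (I : Set C) : ∀ n : ℕ, ∃ J : Set C,
    thickLevel C I (n + 1) = setOf (MemThickOne C J)
  | 0 => ⟨I, rfl⟩
  | (n + 1) => ⟨_, rfl⟩

lemma thickLevel_shift {I : Set C} {n : ℕ} {X : C} (h : X ∈ thickLevel C I (n + 1)) (m : ℤ) :
    X⟦m⟧ ∈ thickLevel C I (n + 1) := by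
  obtain ⟨J, hJ⟩ := thickLevel_succ_eq I n
  rw [hJ] at h ⊢
  exact MemThickOne.shift _ m h

lemma thickLevel_isZero {I : Set C} {n : ℕ} {X : C} (h : IsZero X) :
    X ∈ thickLevel C I (n + 1) := by
  obtain ⟨J, hJ⟩ := thickLevel_succ_eq I n
  rw [hJ]
  exact MemThickOne.zero _ h

lemma thickLevel_retract {I : Set C} {n : ℕ} {X Y : C} (h : Y ∈ thickLevel C I (n + 1))
    (hr : IsRetractOf C X Y) : X ∈ thickLevel C I (n + 1) := by
  obtain ⟨J, hJ⟩ := thickLevel_succ_eq I n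
  rw [hJ] at h ⊢
  exact MemThickOne.retract _ _ h hr

lemma thickLevel_pi {I : Set C} {n : ℕ} (f : WalkingPair → C) [HasProduct f]
    (hl : f .left ∈ thickLevel C I (n + 1)) (hr : f .right ∈ thickLevel C I (n + 1)) :
    ∏ᶜ f ∈ thickLevel C I (n + 1) := by
  obtain ⟨J, hJ⟩ := thickLevel_succ_eq I n
  rw [hJ] at hl hr ⊢
  exact memThickOne_pi f hl hr

lemma starSet_zero_mem (I : Set C) (n : ℕ) :
    (0 : C) ∈ starSet C (thickLevel C I (n + 1)) (setOf (MemThickOne C I)) :=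
  ⟨0, 0, thickLevel_isZero (isZero_zero C), MemThickOne.zero _ (isZero_zero C),
    𝟙 0, 0, 0, contractible_distinguished 0⟩

lemma starSet_shift {I : Set C} {n : ℕ} {Z : C}
    (h : Z ∈ starSet C (thickLevel C I (n + 1)) (setOf (MemThickOne C I))) (m : ℤ) :
    Z⟦m⟧ ∈ starSet C (thickLevel C I (n + 1)) (setOf (MemThickOne C I)) := by
  obtain ⟨Y₁, Y₂, h1, h2, f, g, hh, hT⟩ := h
  have := Triangle.shift_distinguished _ hT m
  rw [Triangle.shiftFunctor_eq] at this
  exact ⟨Y₁⟦m⟧, Y₂⟦m⟧, thickLevel_shift h1 m, MemThickOne.shift _ m h2, _, _, _, this⟩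

lemma starSet_sum {I : Set C} {n : ℕ} {A B : C}
    (hA : A ∈ starSet C (thickLevel C I (n + 1)) (setOf (MemThickOne C I)))
    (hB : B ∈ starSet C (thickLevel C I (n + 1)) (setOf (MemThickOne C I))) :
    ∃ P ∈ starSet C (thickLevel C I (n + 1)) (setOf (MemThickOne C I)),
      ∃ (iA : A ⟶ P) (iB : B ⟶ P) (pA : P ⟶ A) (pB : P ⟶ B),
        iA ≫ pA = 𝟙 A ∧ iB ≫ pB = 𝟙 B ∧ iA ≫ pB = 0 ∧ iB ≫ pA = 0 ∧
          pA ≫ iA + pB ≫ iB = 𝟙 P := by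
  obtain ⟨Y₁, Y₂, a1, a2, fa, ga, ha, hTA⟩ := hA
  obtain ⟨Y₁', Y₂', b1, b2, fb, gb, hb, hTB⟩ := hB
  let T : WalkingPair → Triangle C := fun j => match j with
    | .left => Triangle.mk fa ga ha
    | .right => Triangle.mk fb gb hb
  have hT : ∀ j, T j ∈ distTriang C := by rintro (_ | _); exacts [hTA, hTB]
  have hd := productTriangle_distinguished T hT
  obtain ⟨iA, iB, pA, pB, h1, h2, h3, h4, h5⟩ := prodPairData (fun j => (T j).obj₂)
  exact ⟨∏ᶜ (fun j => (T j).obj₂),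
    ⟨∏ᶜ (fun j => (T j).obj₁), ∏ᶜ (fun j => (T j).obj₃),
      thickLevel_pi _ a1 b1, memThickOne_pi _ a2 b2, _, _, _, hd⟩,
    iA, iB, pA, pB, h1, h2, h3, h4, h5⟩

lemma exists_retract_in (J : Set C)
    (hzero : ∃ z ∈ J, IsZero z)
    (hshift : ∀ Y ∈ J, ∀ m : ℤ, Y⟦m⟧ ∈ J)
    (hsum : ∀ A ∈ J, ∀ B ∈ J, ∃ P ∈ J,
      ∃ (iA : A ⟶ P) (iB : B ⟶ P) (pA : P ⟶ A) (pB : P ⟶ B),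
        iA ≫ pA = 𝟙 A ∧ iB ≫ pB = 𝟙 B ∧ iA ≫ pB = 0 ∧ iB ≫ pA = 0 ∧
          pA ≫ iA + pB ≫ iB = 𝟙 P)
    {Z : C} (hZ : MemThickOne C J Z) : ∃ Z' ∈ J, IsRetractOf C Z Z' := by
  induction hZ with
  | of X hX => exact ⟨X, hX, 𝟙 X, 𝟙 X, by simp⟩
  | zero X hX =>
    obtain ⟨z, hz, _⟩ := hzero
    exact ⟨z, hz, 0, 0, by rw [zero_comp]; exact hX.eq_of_src _ _⟩
  | shift X m hX IH =>
    obtain ⟨Y', hY', s, r, hsr⟩ := IH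
    exact ⟨Y'⟦m⟧, hshift Y' hY' m, s⟦m⟧', r⟦m⟧',
      by rw [← CategoryTheory.Functor.map_comp, hsr, CategoryTheory.Functor.map_id]⟩
  | sum X Y Z hX hY hdata IHX IHY =>
    obtain ⟨iX, iY, pX, pY, e1, e2, etot⟩ := hdata
    obtain ⟨A', hA', sa, ra, hra⟩ := IHX
    obtain ⟨B', hB', sb, rb, hrb⟩ := IHY
    obtain ⟨P, hP, iA, iB, pA, pB, f1, f2, f3, f4, _⟩ := hsum A' hA' B' hB'
    refine ⟨P, hP, pX ≫ sa ≫ iA + pY ≫ sb ≫ iB, pA ≫ ra ≫ iX + pB ≫ rb ≫ iY, ?_⟩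
    simp only [Preadditive.add_comp, Preadditive.comp_add, Category.assoc,
      reassoc_of% f1, reassoc_of% f2, reassoc_of% f3,
      reassoc_of% f4, zero_comp, comp_zero, add_zero, zero_add,
      reassoc_of% hra, reassoc_of% hrb]
    exact etot
  | retract X Y hY hXY IHY =>
    obtain ⟨Y', hY', s, r, hsr⟩ := IHY
    obtain ⟨s0, r0, h0⟩ := hXY
    exact ⟨Y', hY', s0 ≫ s, r ≫ r0, by
      rw [Category.assoc, ← Category.assoc s, hsr, id_comp, h0]⟩

variable [IsTriangulated C]

lemma devissage (I : Set C) (n : ℕ) {X₁ W Z : C} (f : X₁ ⟶ W) (g : W ⟶ Z)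
    (h : Z ⟶ X₁⟦(1 : ℤ)⟧) (hT : Triangle.mk f g h ∈ distTriang C)
    (h1 : MemThickOne C I X₁) (hZ : Z ∈ thickLevel C I (n + 1)) :
    W ∈ thickLevel C I (n + 2) := by
  induction n generalizing X₁ W Z with
  | zero => exact MemThickOne.of _ ⟨X₁, Z, h1, hZ, f, g, h, hT⟩
  | succ n IH =>
    -- `Z` is a retract of an honest extension `Z'` of an `L1`-object by a
    -- `thickLevel (n+1)`-object
    have hZJ : MemThickOne C (starSet C (thickLevel C I (n + 1))
        (setOf (MemThickOne C I))) Z := hZ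
    obtain ⟨Z', hZ'J, s, r, hsr⟩ := exists_retract_in _
      ⟨0, starSet_zero_mem I n, isZero_zero C⟩
      (fun Y hY m => starSet_shift hY m)
      (fun A hA B hB => starSet_sum hA hB) hZJ
    -- replace the triangle over `Z` by a triangle over `Z'`, of which `W` is a retract
    obtain ⟨W', f', g', hT'⟩ := distinguished_cocone_triangle₂ (r ≫ h)
    have hT2 : (Triangle.mk f g h).rotate.rotate ∈ distTriang C :=
      rot_of_distTriang _ (rot_of_distTriang _ hT)
    have hT2' : (Triangle.mk f' g' (r ≫ h)).rotate.rotate ∈ distTriang C :=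
      rot_of_distTriang _ (rot_of_distTriang _ hT')
    have comm1 : (Triangle.mk f g h).rotate.rotate.mor₁ ≫ (𝟙 _) =
        s ≫ (Triangle.mk f' g' (r ≫ h)).rotate.rotate.mor₁ := by
      show h ≫ 𝟙 _ = s ≫ r ≫ h
      rw [comp_id, ← Category.assoc, hsr, id_comp]
    have comm2 : (Triangle.mk f' g' (r ≫ h)).rotate.rotate.mor₁ ≫ (𝟙 _) =
        r ≫ (Triangle.mk f g h).rotate.rotate.mor₁ := by
      show (r ≫ h) ≫ 𝟙 _ = r ≫ h
      rw [comp_id]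
    let ψ := completeDistinguishedTriangleMorphism _ _ hT2 hT2' s (𝟙 _) comm1
    let ψ' := completeDistinguishedTriangleMorphism _ _ hT2' hT2 r (𝟙 _) comm2
    have hiso : IsIso ((ψ ≫ ψ').hom₃) := by
      refine isIso₃_of_isIso₁₂ (ψ ≫ ψ') hT2 hT2 ?_ ?_
      · have e : (ψ ≫ ψ').hom₁ = 𝟙 _ := by
          rw [comp_hom₁]
          show s ≫ r = 𝟙 _
          exact hsr
        rw [e]; infer_instance
      · have e : (ψ ≫ ψ').hom₂ = 𝟙 _ := by
          rw [comp_hom₂]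
          show 𝟙 _ ≫ 𝟙 _ = 𝟙 _
          simp
        rw [e]; infer_instance
    have hret : IsRetractOf C (W⟦(1 : ℤ)⟧) (W'⟦(1 : ℤ)⟧) := by
      refine ⟨ψ.hom₃, ψ'.hom₃ ≫ @inv _ _ _ _ ((ψ ≫ ψ').hom₃) hiso, ?_⟩
      exact (Category.assoc _ _ _).symm.trans (@IsIso.hom_inv_id _ _ _ _ _ hiso)
    -- now use the octahedron axiom on the triangle over `Z'`
    obtain ⟨Y₁, Y₂, hY₁, hY₂, a, b, c, hTz⟩ := hZ'J
    obtain ⟨E, v, w, hE⟩ := distinguished_cocone_triangle (g' ≫ b)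
    have hrot1 : Triangle.mk g' (r ≫ h) (-(f'⟦(1 : ℤ)⟧')) ∈ distTriang C :=
      rot_of_distTriang _ hT'
    have hrot2 : Triangle.mk b c (-(a⟦(1 : ℤ)⟧')) ∈ distTriang C :=
      rot_of_distTriang _ hTz
    let O := Triangulated.someOctahedron rfl hrot1 hrot2 hE
    have hEmem : E ∈ thickLevel C I (n + 2) :=
      IH O.m₁ O.m₃ _ O.mem (MemThickOne.shift _ 1 h1) (thickLevel_shift hY₁ 1)
    have hW' : W' ∈ starSet C (thickLevel C I (n + 2)) (setOf (MemThickOne C I)) :=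
      ⟨E⟦(-1 : ℤ)⟧, Y₂, thickLevel_shift hEmem (-1), hY₂, _, _, _,
        inv_rot_of_distTriang _ hE⟩
    show MemThickOne C (starSet C (thickLevel C I (n + 2)) (setOf (MemThickOne C I))) W
    have m1 := MemThickOne.of _ hW'
    have m2 := MemThickOne.shift (I := starSet C (thickLevel C I (n + 2))
      (setOf (MemThickOne C I))) _ (1 : ℤ) m1
    have m3 := MemThickOne.retract _ _ m2 hret
    have m4 := MemThickOne.shift (I := starSet C (thickLevel C I (n + 2))
      (setOf (MemThickOne C I))) _ (-1 : ℤ) m3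
    exact MemThickOne.retract _ _ m4
      (isRetractOf_of_iso ((shiftFunctorCompIsoId C (1 : ℤ) (-1) (by ring)).symm.app W))

end DevissageAux

section ModuleSideAux

open CategoryTheory.Limits CategoryTheory.Pretriangulated DerivedCategory

variable {Λ : Type u} [Ring Λ]

/-- The linear map `(Fin k → V) → (Fin (k+1) → V)` prepending a zero. -/
def consZeroHom (V : ModuleCat.{u} Λ) (k : ℕ) : (Fin k → V) →ₗ[Λ] (Fin (k + 1) → V) where
  toFun f := Fin.cons 0 f
  map_add' f g := by
    funext j
    refine Fin.cases ?_ (fun i => ?_) j <;> simp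
  map_smul' c f := by
    funext j
    refine Fin.cases ?_ (fun i => ?_) j <;> simp

variable [HasDerivedCategory.{w} (ModuleCat.{u} Λ)]

lemma single_retract {M N : ModuleCat.{u} Λ} (s : M →ₗ[Λ] N) (r : N →ₗ[Λ] M)
    (hrs : r.comp s = LinearMap.id) :
    IsRetractOf (DerivedCategory (ModuleCat.{u} Λ))
      ((singleFunctor (ModuleCat.{u} Λ) 0).obj M)
      ((singleFunctor (ModuleCat.{u} Λ) 0).obj N) := by
  refine ⟨(singleFunctor _ 0).map (ModuleCat.ofHom s), (singleFunctor _ 0).map (ModuleCat.ofHom r), ?_⟩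
  rw [← CategoryTheory.Functor.map_comp]
  rw [show (ModuleCat.ofHom s ≫ ModuleCat.ofHom r : M ⟶ M) = 𝟙 M from ModuleCat.hom_ext hrs, CategoryTheory.Functor.map_id]

lemma memAdd_single {V M : ModuleCat.{u} Λ} (h : MemAdd Λ V M) :
    MemThickOne (DerivedCategory (ModuleCat.{u} Λ))
      {(singleFunctor (ModuleCat.{u} Λ) 0).obj V}
      ((singleFunctor (ModuleCat.{u} Λ) 0).obj M) := by
  obtain ⟨n, s, r, hrs⟩ := h
  have key : ∀ k : ℕ, MemThickOne (DerivedCategory (ModuleCat.{u} Λ))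
      {(singleFunctor (ModuleCat.{u} Λ) 0).obj V}
      ((singleFunctor (ModuleCat.{u} Λ) 0).obj (ModuleCat.of Λ (Fin k → V))) := by
    intro k
    induction k with
    | zero =>
      haveI : Subsingleton (Fin 0 → V) := ⟨fun a b => funext fun i => i.elim0⟩
      exact MemThickOne.zero _
        (CategoryTheory.Functor.map_isZero _ (ModuleCat.isZero_of_subsingleton _))
    | succ k IHk =>
      let i0 : V ⟶ ModuleCat.of Λ (Fin (k + 1) → V) := ModuleCat.ofHom (LinearMap.single Λ (fun _ : Fin (k + 1) => V) 0)
      let p0 : ModuleCat.of Λ (Fin (k + 1) → V) ⟶ V := ModuleCat.ofHom (LinearMap.proj 0)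
      let i1 : ModuleCat.of Λ (Fin k → V) ⟶ ModuleCat.of Λ (Fin (k + 1) → V) :=
        ModuleCat.ofHom (consZeroHom V k)
      let p1 : ModuleCat.of Λ (Fin (k + 1) → V) ⟶ ModuleCat.of Λ (Fin k → V) :=
        ModuleCat.ofHom (LinearMap.funLeft Λ V Fin.succ)
      have e1 : i0 ≫ p0 = 𝟙 V := by
        refine ModuleCat.hom_ext (LinearMap.ext fun x => ?_)
        show Pi.single (M := fun _ : Fin (k + 1) => V) 0 x 0 = x
        simp
      have e2 : i1 ≫ p1 = 𝟙 (ModuleCat.of Λ (Fin k → V)) := by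
        refine ModuleCat.hom_ext (LinearMap.ext fun x => ?_)
        funext j
        show Fin.cons (α := fun _ : Fin (k + 1) => V) 0 x j.succ = x j
        simp
      have e3 : p0 ≫ i0 + p1 ≫ i1 = 𝟙 (ModuleCat.of Λ (Fin (k + 1) → V)) := by
        refine ModuleCat.hom_ext (LinearMap.ext fun x => ?_)
        funext j
        show Pi.single (M := fun _ : Fin (k + 1) => V) 0 (x 0) j +
          Fin.cons (α := fun _ : Fin (k + 1) => V) 0 (fun i => x i.succ) j = x j
        refine Fin.cases ?_ (fun i => ?_) j
        · simp
        · rw [Pi.single_eq_of_ne (Fin.succ_ne_zero i), Fin.cons_succ, zero_add]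
      refine MemThickOne.sum _ _ _ (MemThickOne.of _ rfl) IHk
        ⟨(singleFunctor _ 0).map i0, (singleFunctor _ 0).map i1,
          (singleFunctor _ 0).map p0, (singleFunctor _ 0).map p1, ?_, ?_, ?_⟩
      · rw [← CategoryTheory.Functor.map_comp, e1, CategoryTheory.Functor.map_id]
      · rw [← CategoryTheory.Functor.map_comp, e2, CategoryTheory.Functor.map_id]
      · rw [← CategoryTheory.Functor.map_comp, ← CategoryTheory.Functor.map_comp, ← CategoryTheory.Functor.map_add, e3, CategoryTheory.Functor.map_id]
  exact MemThickOne.retract _ _ (key n)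
    (single_retract (N := ModuleCat.of Λ (Fin n → V)) s r hrs)

lemma memBracket_single (T : ModuleCat.{u} Λ) (n : ℕ) (M : ModuleCat.{u} Λ)
    (h : MemBracket Λ T n M) :
    (singleFunctor (ModuleCat.{u} Λ) 0).obj M ∈
      thickLevel (DerivedCategory (ModuleCat.{u} Λ))
        {(singleFunctor (ModuleCat.{u} Λ) 0).obj T} (n + 1) := by
  induction n generalizing M with
  | zero => exact memAdd_single h
  | succ n IH =>
    obtain ⟨U, E, V, f, g, hinj, hsurj, hrk, hU, hV, s, r, hrs⟩ := h
    let S : ShortComplex (ModuleCat.{u} Λ) := ShortComplex.mk (ModuleCat.ofHom f : U ⟶ E) (ModuleCat.ofHom g : E ⟶ V)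
      (by
        refine ModuleCat.hom_ext (LinearMap.ext fun x => ?_)
        have hx : f x ∈ LinearMap.ker g := by
          rw [← hrk]; exact LinearMap.mem_range_self f x
        exact LinearMap.mem_ker.1 hx)
    have hS : S.ShortExact := by
      refine ShortComplex.ShortExact.mk' ?_ ?_ ?_
      · rw [S.moduleCat_exact_iff_range_eq_ker]
        exact hrk
      · exact (ModuleCat.mono_iff_injective (ModuleCat.ofHom f : U ⟶ E)).2 hinj
      · exact (ModuleCat.epi_iff_surjective (ModuleCat.ofHom g : E ⟶ V)).2 hsurj
    have hmid := devissage {(singleFunctor (ModuleCat.{u} Λ) 0).obj T} n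
      ((singleFunctor (ModuleCat.{u} Λ) 0).map S.f)
      ((singleFunctor (ModuleCat.{u} Λ) 0).map S.g) hS.singleδ
      hS.singleTriangle_distinguished (memAdd_single hU) (IH V hV)
    exact thickLevel_retract hmid (single_retract s r hrs)

/-- The homology of `(singleFunctor C 0).obj M` computed via the single cochain complex. -/
noncomputable def homologySingleIso (M : ModuleCat.{u} Λ) (n : ℤ) :
    (homologyFunctor (ModuleCat.{u} Λ) n).obj ((singleFunctor (ModuleCat.{u} Λ) 0).obj M) ≅
      ((HomologicalComplex.single (ModuleCat.{u} Λ) (ComplexShape.up ℤ) 0).obj M).homology n :=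
  (homologyFunctor (ModuleCat.{u} Λ) n).mapIso
      (((SingleFunctors.evaluation _ _ 0).mapIso
        (singleFunctorsPostcompQIso (ModuleCat.{u} Λ))).app M) ≪≫
    (homologyFunctorFactors (ModuleCat.{u} Λ) n).app _

lemma isZero_homology_single (M : ModuleCat.{u} Λ) (n : ℤ) (hn : n ≠ 0) :
    IsZero ((homologyFunctor (ModuleCat.{u} Λ) n).obj
      ((singleFunctor (ModuleCat.{u} Λ) 0).obj M)) :=
  IsZero.of_iso
    (HomologicalComplex.isZero_single_obj_homology (ComplexShape.up ℤ) 0 M n hn)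
    (homologySingleIso M n)

lemma moduleFinite_of_isZero (X : ModuleCat.{u} Λ) (h : IsZero X) : Module.Finite Λ X := by
  haveI : Subsingleton X :=
    ⟨fun a b => by
      have e : X ≅ ModuleCat.of Λ PUnit :=
        h.iso (ModuleCat.isZero_of_subsingleton (ModuleCat.of Λ PUnit))
      have := e.toLinearEquiv.injective
      exact this (Subsingleton.elim _ _)⟩
  exact Module.Finite.of_surjective (0 : Λ →ₗ[Λ] X)
    (fun x => ⟨0, Subsingleton.elim _ _⟩)

lemma isDb_single (T : ModuleCat.{u} Λ) (hT : Module.Finite Λ T) :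
    IsDbObject Λ ((singleFunctor (ModuleCat.{u} Λ) 0).obj T) := by
  constructor
  · refine ⟨0, 0, fun n hn => ?_⟩
    exact isZero_homology_single T n (by omega)
  · intro n
    by_cases hn : n = 0
    · subst hn
      exact Module.Finite.equiv
        ((homologySingleIso T 0 ≪≫
          HomologicalComplex.singleObjHomologySelfIso (ComplexShape.up ℤ) 0 T).symm.toLinearEquiv)
    · exact moduleFinite_of_isZero _ (isZero_homology_single T n hn)

end ModuleSideAux

end Paper

open Paper in
/-- **Lemma 2.3(2).** For any artin algebra `Λ`, the dimension of the subcategory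
`Λ-mod` inside `D^b(Λ-mod)` is at most `ext.dim Λ`. -/
theorem derivedDimOfMod_le_extDim
    (R : Type u) [CommRing R] [IsArtinianRing R]
    (Λ : Type u) [Ring Λ] [Algebra R Λ] [Module.Finite R Λ] :
    derivedDimOfMod Λ ≤ extDim Λ := by
  refine le_sInf fun c hc => ?_
  obtain ⟨n, T, rfl, hTfin, hall⟩ := hc
  rw [derivedDimOfMod]
  letI := HasDerivedCategory.standard (ModuleCat.{u} Λ)
  exact sInf_le ⟨n, (DerivedCategory.singleFunctor (ModuleCat.{u} Λ) 0).obj T, rfl,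
    isDb_single T hTfin, fun M hM => memBracket_single T n M (hall M hM)⟩
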